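/- (Convergence of eigencouples under G-convergence) Let λ > 0, let A_h be a sequence in P_λ(Y) G-converging to A ∈ P_λ(Y), and let {μ_h, u_h} ∈ ℝ × Y solve the eigenvalue problem A_h u_h = μ_h u_h. If {μ_h, u_h} → {μ, u} in ℝ × Y, then the limit couple {μ, u} solves the eigenvalue problem A u = μ u. -/

import Mathlib

open Filter Topology
open scoped InnerProductSpace RealInnerProductSpace ENNReal

noncomputable section

variable (Y : Type*) [NormedAddCommGroup Y] [InnerProductSpace ℝ Y] [CompleteSpace Y]

/-- The class `P_lam(Y)`: self-adjoint operators `A` defined on a linear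
subspace of `Y`, regarded as operators on the closed subspace
`V = closure(D(A))`, satisfying `⟨Au, u⟩ ≥ lam ‖u‖²` on `D(A)`.
Self-adjointness of the symmetric semibounded operator is encoded by
surjectivity of `A + μI : D(A) → V` for every `μ > 0`. -/
structure POp (lam : ℝ) where
  dom : Submodule ℝ Y
  op : dom →ₗ[ℝ] Y
  mem_closure : ∀ u : dom, op u ∈ dom.topologicalClosure
  symmetric : ∀ u v : dom, ⟪op u, (v : Y)⟫ = ⟪(u : Y), op v⟫
  coercive : ∀ u : dom, lam * ‖(u : Y)‖ ^ 2 ≤ ⟪op u, (u : Y)⟫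
  selfadj : ∀ μ : ℝ, 0 < μ → ∀ v ∈ dom.topologicalClosure,
    ∃ u : dom, op u + μ • (u : Y) = v

variable {Y}

/-- The orthogonal projection of `Y` onto the closure of a subspace. -/
def projClosure (K : Submodule ℝ Y) (u : Y) : Y :=
  haveI : CompleteSpace K.topologicalClosure :=
    K.isClosed_topologicalClosure.completeSpace_coe
  (K.topologicalClosure.orthogonalProjection u : Y)

/-- `x` solves `(A + μ I) x = P u`, where `P` is the orthogonal projection onto
the closure of the domain of `A`. -/
def SolvesShifted {lam : ℝ} (A : POp Y lam) (μ : ℝ) (x : Y) (u : Y) : Prop :=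
  ∃ hx : x ∈ A.dom, A.op ⟨x, hx⟩ + μ • x = projClosure A.dom u

/-- G-convergence of `(A_h + μI)` to `(A + μI)`: for every `u ∈ Y`,
`(A_h + μ)⁻¹ P_h u → (A + μ)⁻¹ P u` in `Y` (the inverses applied to the
projections, expressed through the — unique — solutions of the corresponding
equations). With `μ = 0` this is the G-convergence `A_h → A` of Definition 4,
and quantifying over all `μ > 0` gives strong resolvent convergence. -/
def GConvShift {lam : ℝ} (μ : ℝ) (A : ℕ → POp Y lam) (B : POp Y lam) : Prop :=
  ∀ u : Y, ∀ x : ℕ → Y, ∀ y : Y,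
    (∀ h, SolvesShifted (A h) μ (x h) u) → SolvesShifted B μ y u →
      Tendsto x atTop (𝓝 y)

/-- G-convergence `A_h → A` in `P_lam(Y)`, `lam > 0`. -/
def GConvOp {lam : ℝ} (A : ℕ → POp Y lam) (B : POp Y lam) : Prop :=
  GConvShift 0 A B

/-- Convergence in the strong resolvent sense for operators of class `P₀(Y)`. -/
def SRSConv (A : ℕ → POp Y 0) (B : POp Y 0) : Prop :=
  ∀ μ : ℝ, 0 < μ → GConvShift μ A B


lemma projClosure_mem (K : Submodule ℝ Y) (z : Y) :
    projClosure K z ∈ K.topologicalClosure := by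
  unfold projClosure
  exact SetLike.coe_mem _

lemma projClosure_eq_self (K : Submodule ℝ Y) {z : Y} (hz : z ∈ K.topologicalClosure) :
    projClosure K z = z := by
  haveI : CompleteSpace K.topologicalClosure :=
    K.isClosed_topologicalClosure.completeSpace_coe
  unfold projClosure
  exact congrArg Subtype.val
    (Submodule.orthogonalProjection_mem_subspace_eq_self (⟨z, hz⟩ : K.topologicalClosure))

lemma projClosure_sub (K : Submodule ℝ Y) (a b : Y) :
    projClosure K a - projClosure K b = projClosure K (a - b) := by
  haveI : CompleteSpace K.topologicalClosure :=
    K.isClosed_topologicalClosure.completeSpace_coe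
  unfold projClosure
  rw [← Submodule.coe_sub, ← map_sub]

lemma norm_projClosure_le (K : Submodule ℝ Y) (z : Y) : ‖projClosure K z‖ ≤ ‖z‖ := by
  haveI : CompleteSpace K.topologicalClosure :=
    K.isClosed_topologicalClosure.completeSpace_coe
  unfold projClosure
  calc ‖(K.topologicalClosure.orthogonalProjection z : Y)‖
      = ‖K.topologicalClosure.orthogonalProjection z‖ := rfl
    _ ≤ ‖K.topologicalClosure.orthogonalProjection‖ * ‖z‖ :=
        (K.topologicalClosure.orthogonalProjection).le_opNorm z
    _ ≤ 1 * ‖z‖ :=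
        mul_le_mul_of_nonneg_right (Submodule.orthogonalProjectionOnto_norm_le _) (norm_nonneg z)
    _ = ‖z‖ := one_mul _

/-- Coercivity gives the lower bound `lam ‖d‖ ≤ ‖A d‖`. -/
lemma POp.norm_op_ge {lam : ℝ} (hlam : 0 < lam) (A : POp Y lam) (d : A.dom) :
    lam * ‖(d : Y)‖ ≤ ‖A.op d‖ := by
  rcases eq_or_ne ((d : Y)) 0 with h | h
  · simp [h]
  · have h1 := A.coercive d
    have h2 : ⟪A.op d, (d : Y)⟫ ≤ ‖A.op d‖ * ‖(d : Y)‖ := real_inner_le_norm _ _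
    have hn : 0 < ‖(d : Y)‖ := norm_pos_iff.mpr h
    nlinarith

/-- Surjectivity of `A : D(A) → closure D(A)` for `A ∈ P_lam(Y)`, `lam > 0`,
obtained from surjectivity of `A + I` by the Banach fixed point theorem. -/
lemma POp.surj_zero {lam : ℝ} (hlam : 0 < lam) (A : POp Y lam) (v : Y)
    (hv : v ∈ A.dom.topologicalClosure) : ∃ x : A.dom, A.op x = v := by
  haveI : CompleteSpace A.dom.topologicalClosure :=
    A.dom.isClosed_topologicalClosure.completeSpace_coe
  set V := A.dom.topologicalClosure with hV
  haveI : Nonempty V := ⟨0⟩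
  have hdomle : A.dom ≤ V := A.dom.le_topologicalClosure
  have hsel : ∀ w : V, ∃ gu : A.dom, A.op gu + (1 : ℝ) • (gu : Y) = v + (w : Y) :=
    fun w => A.selfadj 1 one_pos _ (V.add_mem hv w.2)
  choose g hg using hsel
  set f : V → V := fun w => ⟨(g w : Y), hdomle (g w).2⟩ with hf
  have hKnn : (0 : ℝ) ≤ 1 / (lam + 1) := by positivity
  set K : NNReal := ⟨1 / (lam + 1), hKnn⟩ with hKdef
  have hcontr : ContractingWith K f := by
    constructor
    · rw [← NNReal.coe_lt_one]
      show (1 : ℝ) / (lam + 1) < 1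
      rw [div_lt_one (by linarith)]
      linarith
    · apply LipschitzWith.of_dist_le_mul
      intro w1 w2
      have hd : A.op (g w1 - g w2) + ((g w1 : Y) - (g w2 : Y)) = (w1 : Y) - (w2 : Y) := by
        have e1 := hg w1
        have e2 := hg w2
        rw [map_sub]
        rw [one_smul] at e1 e2
        linear_combination (norm := module) e1 - e2
      set d : A.dom := g w1 - g w2 with hdd
      have hco := A.coercive d
      have hinner : ⟪A.op d + ((d : Y)), (d : Y)⟫ = ⟪(w1 : Y) - (w2 : Y), (d : Y)⟫ := by
        rw [hdd]; push_cast; rw [hd]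
      rw [inner_add_left, real_inner_self_eq_norm_sq] at hinner
      have hib : ⟪(w1 : Y) - (w2 : Y), (d : Y)⟫ ≤ ‖(w1 : Y) - (w2 : Y)‖ * ‖(d : Y)‖ :=
        real_inner_le_norm _ _
      have hdle : (lam + 1) * ‖(d : Y)‖ ^ 2 ≤ ‖(w1 : Y) - (w2 : Y)‖ * ‖(d : Y)‖ := by
        nlinarith
      have hnorm : ‖(d : Y)‖ ≤ (1 / (lam + 1)) * ‖(w1 : Y) - (w2 : Y)‖ := by
        rcases eq_or_lt_of_le (norm_nonneg ((d : Y))) with h0 | h0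
        · rw [← h0]; positivity
        · rw [div_mul_eq_mul_div, le_div_iff₀ (by linarith)]
          nlinarith
      calc dist (f w1) (f w2) = ‖(d : Y)‖ := by
            rw [Subtype.dist_eq, dist_eq_norm]; rfl
        _ ≤ (1 / (lam + 1)) * ‖(w1 : Y) - (w2 : Y)‖ := hnorm
        _ = (K : ℝ) * dist w1 w2 := by
            rw [Subtype.dist_eq, dist_eq_norm]; rfl
  set x := ContractingWith.fixedPoint f hcontr with hx
  have hfix : f x = x := hcontr.fixedPoint_isFixedPt
  refine ⟨g x, ?_⟩
  have hgx : (g x : Y) = (x : Y) := congrArg Subtype.val hfix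
  have := hg x
  rw [one_smul, hgx] at this
  exact add_right_cancel this

/-- **Convergence of eigencouples under G-convergence** (Theorem 7): if
`lam > 0`, `A_h ∈ P_lam(Y)` G-converges to `A ∈ P_lam(Y)`, `{μ_h, u_h}` solve
the eigenvalue problems `A_h u_h = μ_h u_h`, and `{μ_h, u_h} → {μ, u}` in
`ℝ × Y`, then `A u = μ u`. -/
theorem eigencouple_convergence {Y : Type*} [NormedAddCommGroup Y]
    [InnerProductSpace ℝ Y] [CompleteSpace Y]
    (lam : ℝ) (hlam : 0 < lam) (A : ℕ → POp Y lam) (B : POp Y lam)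
    (hG : GConvOp A B)
    (μs : ℕ → ℝ) (us : ℕ → Y)
    (heig : ∀ h, ∃ hu : us h ∈ (A h).dom, (A h).op ⟨us h, hu⟩ = μs h • us h)
    (μ : ℝ) (u : Y)
    (hμ : Tendsto μs atTop (𝓝 μ)) (hu : Tendsto us atTop (𝓝 u)) :
    ∃ hmem : u ∈ B.dom, B.op ⟨u, hmem⟩ = μ • u := by
  -- solutions of `A_h x_h = P_h (μ u)`
  have hx : ∀ h, ∃ xh : (A h).dom, (A h).op xh = projClosure (A h).dom (μ • u) :=
    fun h => (A h).surj_zero hlam _ (projClosure_mem _ _)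
  choose x hxeq using hx
  -- solution of `B y = P (μ u)`
  obtain ⟨y, hy⟩ := B.surj_zero hlam (projClosure B.dom (μ • u)) (projClosure_mem _ _)
  -- G-convergence: x_h → y
  have hGx : Tendsto (fun h => ((x h : Y))) atTop (𝓝 (y : Y)) := by
    refine hG (μ • u) _ _ (fun h => ⟨(x h).2, ?_⟩) ⟨y.2, ?_⟩
    · simpa using hxeq h
    · simp only [zero_smul, add_zero, Subtype.coe_eta]
      exact hy
  -- `u_h - x_h → 0` by uniform coercivity
  have hdiff : Tendsto (fun h => us h - (x h : Y)) atTop (𝓝 0) := by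
    have key : ∀ h, ‖us h - (x h : Y)‖ ≤ (1 / lam) * ‖μs h • us h - μ • u‖ := by
      intro h
      obtain ⟨hmemh, heq⟩ := heig h
      set d : (A h).dom := ⟨us h, hmemh⟩ - x h with hdd
      have hdco : (d : Y) = us h - (x h : Y) := rfl
      have hopd : (A h).op d = projClosure (A h).dom (μs h • us h - μ • u) := by
        rw [hdd, map_sub, heq, hxeq h, ← projClosure_sub]
        congr 1
        exact (projClosure_eq_self _ (heq ▸ (A h).mem_closure ⟨us h, hmemh⟩)).symm
      have h1 : lam * ‖(d : Y)‖ ≤ ‖(A h).op d‖ := POp.norm_op_ge hlam _ _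
      have h2 : ‖(A h).op d‖ ≤ ‖μs h • us h - μ • u‖ := by
        rw [hopd]; exact norm_projClosure_le _ _
      rw [← hdco]
      rw [div_mul_eq_mul_div, le_div_iff₀ hlam, one_mul, mul_comm]
      exact h1.trans h2
    have hg0 : Tendsto (fun h => (1 / lam) * ‖μs h • us h - μ • u‖) atTop (𝓝 0) := by
      have : Tendsto (fun h => μs h • us h - μ • u) atTop (𝓝 0) := by
        simpa using (hμ.smul hu).sub (tendsto_const_nhds (x := μ • u))
      simpa using (this.norm.const_mul (1 / lam))
    exact squeeze_zero_norm key hg0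
  -- hence `x_h → u`, so `y = u`
  have hxu : Tendsto (fun h => ((x h : Y))) atTop (𝓝 u) := by
    have := hu.sub hdiff
    simpa using this
  have hyu : (y : Y) = u := tendsto_nhds_unique hGx hxu
  have hmem : u ∈ B.dom := hyu ▸ y.2
  refine ⟨hmem, ?_⟩
  have : (⟨u, hmem⟩ : B.dom) = y := Subtype.ext hyu.symm
  rw [this, hy]
  exact projClosure_eq_self _ (B.dom.le_topologicalClosure (B.dom.smul_mem μ (hyu ▸ y.2)))

end
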